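/- Let A' x ≤ b' be a constraint system with A' ∈ ℚ^{m×n}. Then there exists a partition of its inequalities into two systems A x ≤ b and D x ≤ u with A ∈ ℚ^{m₁×n}, D ∈ ℚ^{m₂×n}, m₁ + m₂ = m, such that: (i) every row of A and every row of D (with its bound) appears as an inequality of A' x ≤ b' and the combined system (A x ≤ b) ∪ (D x ≤ u) has exactly the same rational solutions as A' x ≤ b'; (ii) every row vector d_i of D is bounded in A' x ≤ b' and every row vector a_k of A is unbounded in A' x ≤ b'; and (iii) there exists l ∈ ℚ^{m₂} such that D x ≤ u alone implies l_i ≤ d_i^T x for every row i (i.e., D x ≤ u is double-bounded, with the lower bounds implied without using A x ≤ b). -/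

import Mathlib

open Matrix

section Aux

lemma exists_between_aux {K J : Type} [Fintype K] [Fintype J] (f : K → ℚ) (g : J → ℚ)
    (h : ∀ k j, f k ≤ g j) : ∃ s : ℚ, (∀ k, f k ≤ s) ∧ (∀ j, s ≤ g j) := by
  cases isEmpty_or_nonempty K with
  | inl hK =>
    cases isEmpty_or_nonempty J with
    | inl hJ => exact ⟨0, fun k => hK.elim k, fun j => hJ.elim j⟩
    | inr hJ =>
      exact ⟨Finset.univ.inf' Finset.univ_nonempty g, fun k => hK.elim k,
        fun j => Finset.inf'_le _ (Finset.mem_univ j)⟩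
  | inr hK =>
    exact ⟨Finset.univ.sup' Finset.univ_nonempty f,
      fun k => Finset.le_sup' _ (Finset.mem_univ k),
      fun j => Finset.sup'_le _ _ fun k _ => h k j⟩

lemma motzkin_transposition (n : ℕ) :
    ∀ (ι : Type) [Fintype ι] (a : ι → Fin n → ℚ) (b : ι → ℚ),
    (¬ ∃ x : Fin n → ℚ, ∀ j, a j ⬝ᵥ x ≤ b j) →
    ∃ y : ι → ℚ, (∀ j, 0 ≤ y j) ∧ (∑ j, y j • a j) = 0 ∧ ∑ j, y j * b j < 0 := by
  induction n with
  | zero =>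
    intro ι _ a b hinf
    classical
    have h0 : ∃ j, b j < 0 := by
      by_contra hc
      push_neg at hc
      exact hinf ⟨fun i => i.elim0, fun j => by
        simpa [dotProduct] using hc j⟩
    obtain ⟨j, hj⟩ := h0
    refine ⟨fun s => if s = j then 1 else 0, ?_, ?_, ?_⟩
    · intro s; dsimp only; split <;> norm_num
    · funext i; exact i.elim0
    · have : ∑ s, (if s = j then (1:ℚ) else 0) * b s = b j := by simp
      rw [this]; exact hj
  | succ n ih =>
    intro ι _ a b hinfeas
    classical
    set c : ι → ℚ := fun j => a j 0 with hc
    set t : ι → Fin n → ℚ := fun j => Fin.tail (a j) with ht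
    have hdot : ∀ (j : ι) (s : ℚ) (x : Fin n → ℚ),
        a j ⬝ᵥ Fin.cons s x = c j * s + t j ⬝ᵥ x := by
      intro j s x
      simp [dotProduct, Fin.sum_univ_succ, Fin.tail, hc, ht]
    set Z := {j : ι // c j = 0} with hZ
    set U := {j : ι // 0 < c j} with hU
    set L := {j : ι // c j < 0} with hL
    set a' : Z ⊕ U × L → Fin n → ℚ := Sum.elim (fun z => t z.1)
        (fun p => (c p.1.1)⁻¹ • t p.1.1 - (c p.2.1)⁻¹ • t p.2.1) with ha'
    set b' : Z ⊕ U × L → ℚ := Sum.elim (fun z => b z.1)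
        (fun p => (c p.1.1)⁻¹ * b p.1.1 - (c p.2.1)⁻¹ * b p.2.1) with hb'
    have hinf' : ¬ ∃ x : Fin n → ℚ, ∀ i, a' i ⬝ᵥ x ≤ b' i := by
      rintro ⟨x, hx⟩
      apply hinfeas
      have key : ∀ (kl : L) (ju : U),
          (b kl.1 - t kl.1 ⬝ᵥ x) / c kl.1 ≤ (b ju.1 - t ju.1 ⬝ᵥ x) / c ju.1 := by
        intro kl ju
        have h1 := hx (Sum.inr (ju, kl))
        have h1' : (c ju.1)⁻¹ * (t ju.1 ⬝ᵥ x) - (c kl.1)⁻¹ * (t kl.1 ⬝ᵥ x)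
            ≤ (c ju.1)⁻¹ * b ju.1 - (c kl.1)⁻¹ * b kl.1 := by
          simpa [ha', hb', sub_dotProduct, smul_dotProduct,
            smul_eq_mul] using h1
        rw [div_eq_mul_inv, div_eq_mul_inv]
        ring_nf
        ring_nf at h1'
        linarith
      obtain ⟨s, hs1, hs2⟩ := exists_between_aux
        (fun kl : L => (b kl.1 - t kl.1 ⬝ᵥ x) / c kl.1)
        (fun ju : U => (b ju.1 - t ju.1 ⬝ᵥ x) / c ju.1) key
      refine ⟨Fin.cons s x, fun j => ?_⟩
      rw [hdot]
      rcases lt_trichotomy (c j) 0 with hneg | hzero | hpos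
      · have hle := hs1 ⟨j, hneg⟩
        have : c j * s ≤ c j * ((b j - t j ⬝ᵥ x) / c j) :=
          mul_le_mul_of_nonpos_left hle (le_of_lt hneg)
        rw [mul_div_cancel₀ _ (ne_of_lt hneg)] at this
        linarith
      · have := hx (Sum.inl ⟨j, hzero⟩)
        simp only [ha', hb', Sum.elim_inl] at this
        rw [hzero]; linarith
      · have hle := hs2 ⟨j, hpos⟩
        have : c j * s ≤ c j * ((b j - t j ⬝ᵥ x) / c j) :=
          mul_le_mul_of_nonneg_left hle (le_of_lt hpos)
        rw [mul_div_cancel₀ _ (ne_of_gt hpos)] at this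
        linarith
    obtain ⟨y', hy'0, hy'sum, hy'b⟩ := ih _ a' b' hinf'
    set w : Z ⊕ U × L → ι → ℚ := fun i' j =>
      Sum.elim (fun z : Z => if j = z.1 then (1:ℚ) else 0)
        (fun p : U × L => (if j = p.1.1 then (c p.1.1)⁻¹ else 0)
          + (if j = p.2.1 then -(c p.2.1)⁻¹ else 0)) i' with hw
    have hw0 : ∀ i' j, 0 ≤ w i' j := by
      intro i' j
      rcases i' with z | p
      · simp only [hw, Sum.elim_inl]; split <;> norm_num
      · simp only [hw, Sum.elim_inr]
        have h1 : (0:ℚ) ≤ (if j = p.1.1 then (c p.1.1)⁻¹ else 0) := by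
          split
          · exact inv_nonneg.mpr (le_of_lt p.1.2)
          · exact le_refl 0
        have h2 : (0:ℚ) ≤ (if j = p.2.1 then -(c p.2.1)⁻¹ else 0) := by
          split
          · rw [neg_nonneg]; exact inv_nonpos.mpr (le_of_lt p.2.2)
          · exact le_refl 0
        linarith
    set y : ι → ℚ := fun j => ∑ i', y' i' * w i' j with hy
    have hy0 : ∀ j, 0 ≤ y j := fun j =>
      Finset.sum_nonneg fun i' _ => mul_nonneg (hy'0 i') (hw0 i' j)
    have hswap : ∀ g : ι → ℚ,
        ∑ j, y j * g j = ∑ i', y' i' * (∑ j, w i' j * g j) := by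
      intro g
      simp only [hy, Finset.sum_mul, mul_assoc, ← Finset.mul_sum]
      rw [Finset.sum_comm]; simp [Finset.mul_sum]
    have hinner1 : ∀ (g : ι → ℚ) (z : Z), ∑ j, w (Sum.inl z) j * g j = g z.1 := by
      intro g z
      simp [hw, ite_mul]
    have hinner2 : ∀ (g : ι → ℚ) (p : U × L),
        ∑ j, w (Sum.inr p) j * g j = (c p.1.1)⁻¹ * g p.1.1 - (c p.2.1)⁻¹ * g p.2.1 := by
      intro g p
      simp [hw, add_mul, ite_mul, Finset.sum_add_distrib, sub_eq_add_neg, neg_mul]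
    refine ⟨y, hy0, ?_, ?_⟩
    · funext q
      simp only [Finset.sum_apply, Pi.smul_apply, smul_eq_mul, Pi.zero_apply]
      refine Fin.cases ?_ ?_ q
      · -- coordinate 0
        have hcc : ∑ j, y j * a j 0 = ∑ j, y j * c j := rfl
        rw [hcc, hswap c]
        apply Finset.sum_eq_zero
        intro i' _
        rcases i' with z | p
        · rw [hinner1 c z, z.2, mul_zero]
        · rw [hinner2 c p, inv_mul_cancel₀ (ne_of_gt p.1.2),
            inv_mul_cancel₀ (ne_of_lt p.2.2), sub_self, mul_zero]
      · -- coordinate q.succ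
        intro q
        have h1 : ∑ j, y j * a j q.succ = ∑ j, y j * t j q := by
          apply Finset.sum_congr rfl; intro j _; rw [ht]; rfl
        rw [h1, hswap (fun j => t j q)]
        have h2 : ∀ i' : Z ⊕ U × L, (∑ j, w i' j * t j q) = a' i' q := by
          intro i'
          rcases i' with z | p
          · rw [hinner1 _ z]; simp [ha']
          · rw [hinner2 _ p]; simp [ha']
        have h3 : ∑ i', y' i' * (∑ j, w i' j * t j q) = ∑ i', y' i' * a' i' q := by
          apply Finset.sum_congr rfl; intro i' _; rw [h2]
        rw [h3]
        have h4 : ∑ i', y' i' * a' i' q = (∑ i', y' i' • a' i') q := by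
          rw [Finset.sum_apply]; simp
        rw [h4, hy'sum]; rfl
    · rw [hswap b]
      have h5 : ∑ i', y' i' * (∑ j, w i' j * b j) = ∑ i', y' i' * b' i' := by
        apply Finset.sum_congr rfl
        intro i' _
        rcases i' with z | p
        · rw [hinner1 b z]; simp [hb']
        · rw [hinner2 b p]; simp [hb']
      rw [h5]; exact hy'b

lemma dot_sum_left {n : ℕ} {ι : Type} [Fintype ι] (f : ι → Fin n → ℚ) (x : Fin n → ℚ) :
    (∑ j, f j) ⬝ᵥ x = ∑ j, f j ⬝ᵥ x := by
  simp only [dotProduct, Finset.sum_apply, Finset.sum_mul]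
  rw [Finset.sum_comm]

lemma farkas_cone {n : ℕ} {ι : Type} [Fintype ι] (a : ι → Fin n → ℚ) (b : ι → ℚ)
    (hfeas : ∃ x : Fin n → ℚ, ∀ j, a j ⬝ᵥ x ≤ b j)
    (h : Fin n → ℚ) (u : ℚ) (hu : ∀ x : Fin n → ℚ, (∀ j, a j ⬝ᵥ x ≤ b j) → h ⬝ᵥ x ≤ u) :
    ∃ y : ι → ℚ, (∀ j, 0 ≤ y j) ∧ h = ∑ j, y j • a j := by
  classical
  set a2 : Option ι → Fin n → ℚ := fun o => o.elim (-h) a with ha2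
  set b2 : Option ι → ℚ := fun o => o.elim (-(u+1)) b with hb2
  have hinf : ¬ ∃ x : Fin n → ℚ, ∀ o, a2 o ⬝ᵥ x ≤ b2 o := by
    rintro ⟨x, hx⟩
    have h1 : h ⬝ᵥ x ≤ u := hu x (fun j => hx (some j))
    have h2 := hx none
    simp only [ha2, hb2, Option.elim, neg_dotProduct] at h2
    linarith
  obtain ⟨y, hy0, hysum, hyb⟩ := motzkin_transposition n (Option ι) a2 b2 hinf
  rw [Fintype.sum_option] at hysum hyb
  simp only [ha2, hb2, Option.elim] at hysum hyb
  rcases eq_or_lt_of_le (hy0 none) with hl0 | hl0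
  · exfalso
    rw [← hl0, zero_smul, zero_add] at hysum
    rw [← hl0, zero_mul, zero_add] at hyb
    obtain ⟨x0, hx0⟩ := hfeas
    have heval : (0 : ℚ) = (∑ j, y (some j) • a j) ⬝ᵥ x0 := by rw [hysum]; simp
    rw [dot_sum_left] at heval
    simp only [smul_dotProduct, smul_eq_mul] at heval
    have hle : ∑ j, y (some j) * (a j ⬝ᵥ x0) ≤ ∑ j, y (some j) * b j :=
      Finset.sum_le_sum fun j _ => mul_le_mul_of_nonneg_left (hx0 j) (hy0 (some j))
    linarith
  · refine ⟨fun j => (y none)⁻¹ * y (some j), fun j =>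
      mul_nonneg (inv_nonneg.mpr (le_of_lt hl0)) (hy0 (some j)), ?_⟩
    have : y none • h = ∑ j, y (some j) • a j := by
      have h6 := hysum
      rw [smul_neg, neg_add_eq_zero] at h6
      exact h6
    calc h = (y none)⁻¹ • (y none • h) := by
            rw [smul_smul, inv_mul_cancel₀ (ne_of_gt hl0), one_smul]
      _ = (y none)⁻¹ • ∑ j, y (some j) • a j := by rw [this]
      _ = ∑ j, ((y none)⁻¹ * y (some j)) • a j := by
            rw [Finset.smul_sum]; simp [smul_smul]

end Aux

/-- Direction `h ≠ 0` is bounded in the constraint system `A x ≤ b`: there exist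
`l, u ∈ ℚ` such that `A x ≤ b` implies `hᵀ x ≤ u` and `−hᵀ x ≤ −l`. -/
def Bounded {ι : Type} [Fintype ι] {n : ℕ} (A : Matrix ι (Fin n) ℚ) (b : ι → ℚ)
    (h : Fin n → ℚ) : Prop :=
  ∃ l u : ℚ, (∀ x : Fin n → ℚ, A.mulVec x ≤ b → h ⬝ᵥ x ≤ u) ∧
    (∀ x : Fin n → ℚ, A.mulVec x ≤ b → (-h) ⬝ᵥ x ≤ -l)

/-- Split Equivalence: every constraint system `A' x ≤ b'` (all rows nonzero) can be
partitioned into an unbounded part `A x ≤ b` and a bounded part `D x ≤ u` such that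
(i) the rows are exactly the rows of `A' x ≤ b'` and the combined system has the same
rational solutions, (ii) every row of `D` is bounded in `A' x ≤ b'` and every row of
`A` is unbounded in `A' x ≤ b'`, and (iii) `D x ≤ u` alone implies lower bounds
`l ≤ D x`, i.e., it is double-bounded. -/
theorem split_equivalence {m n : ℕ} (A' : Matrix (Fin m) (Fin n) ℚ) (b' : Fin m → ℚ)
    (hrows : ∀ i : Fin m, A' i ≠ 0) :
    ∃ (m₁ m₂ : ℕ) (_ : m₁ + m₂ = m)
      (A : Matrix (Fin m₁) (Fin n) ℚ) (b : Fin m₁ → ℚ)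
      (D : Matrix (Fin m₂) (Fin n) ℚ) (u : Fin m₂ → ℚ)
      (e : Fin m₁ ⊕ Fin m₂ ≃ Fin m),
      (∀ i : Fin m₁, A i = A' (e (Sum.inl i)) ∧ b i = b' (e (Sum.inl i))) ∧
      (∀ i : Fin m₂, D i = A' (e (Sum.inr i)) ∧ u i = b' (e (Sum.inr i))) ∧
      (∀ x : Fin n → ℚ,
        (A.mulVec x ≤ b ∧ D.mulVec x ≤ u) ↔ A'.mulVec x ≤ b') ∧
      (∀ i : Fin m₂, Bounded A' b' (D i)) ∧
      (∀ k : Fin m₁, ¬ Bounded A' b' (A k)) ∧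
      (∃ l : Fin m₂ → ℚ, ∀ x : Fin n → ℚ, D.mulVec x ≤ u →
        ∀ i : Fin m₂, l i ≤ D.mulVec x i) := by
  classical
  set P : Fin m → Prop := fun i => Bounded A' b' (A' i) with hP
  haveI : DecidablePred P := Classical.decPred P
  set m₁ := Fintype.card {i : Fin m // ¬ P i} with hm₁
  set m₂ := Fintype.card {i : Fin m // P i} with hm₂
  set e₁ : Fin m₁ ≃ {i : Fin m // ¬ P i} := (Fintype.equivFin _).symm with he₁
  set e₂ : Fin m₂ ≃ {i : Fin m // P i} := (Fintype.equivFin _).symm with he₂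
  set e : Fin m₁ ⊕ Fin m₂ ≃ Fin m :=
    (Equiv.sumCongr e₁ e₂).trans ((Equiv.sumComm _ _).trans (Equiv.sumCompl P)) with he
  have he1 : ∀ i : Fin m₁, e (Sum.inl i) = (e₁ i).1 := fun i => rfl
  have he2 : ∀ i : Fin m₂, e (Sum.inr i) = (e₂ i).1 := fun i => rfl
  have hm : m₁ + m₂ = m := by
    have h1 := Fintype.card_congr (Equiv.sumCompl P)
    rw [Fintype.card_sum, Fintype.card_fin] at h1
    omega
  set A : Matrix (Fin m₁) (Fin n) ℚ := Matrix.of fun i j => A' (e (Sum.inl i)) j with hA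
  set b : Fin m₁ → ℚ := fun i => b' (e (Sum.inl i)) with hb
  set D : Matrix (Fin m₂) (Fin n) ℚ := Matrix.of fun i j => A' (e (Sum.inr i)) j with hD
  set u : Fin m₂ → ℚ := fun i => b' (e (Sum.inr i)) with hu
  refine ⟨m₁, m₂, hm, A, b, D, u, e, fun i => ⟨rfl, rfl⟩, fun i => ⟨rfl, rfl⟩, ?_, ?_, ?_, ?_⟩
  · -- same solutions
    intro x
    constructor
    · rintro ⟨h1, h2⟩ i
      have hi : e (e.symm i) = i := e.apply_symm_apply i
      rcases hs : e.symm i with k | k <;> rw [hs] at hi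
      · rw [← hi]; exact h1 k
      · rw [← hi]; exact h2 k
    · intro hx
      exact ⟨fun k => hx (e (Sum.inl k)), fun k => hx (e (Sum.inr k))⟩
  · -- D rows bounded
    intro i
    exact (e₂ i).2
  · -- A rows unbounded
    intro k
    exact (e₁ k).2
  · -- double-boundedness
    have hlb : ∀ i : Fin m₂, ∃ li : ℚ, ∀ x : Fin n → ℚ,
        D.mulVec x ≤ u → li ≤ D.mulVec x i := by
      intro i
      by_cases hfeas : ∃ x0 : Fin n → ℚ, A'.mulVec x0 ≤ b'
      · obtain ⟨x0, hx0⟩ := hfeas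
        obtain ⟨lo, up, hup, hlow⟩ := (e₂ i).2
        set j : Fin m := e (Sum.inr i) with hj
        have hlow' : ∀ x : Fin n → ℚ, (∀ s : Fin m, A' s ⬝ᵥ x ≤ b' s) →
            (-(A' j)) ⬝ᵥ x ≤ -lo := by
          intro x hx
          have : (-(A' (e (Sum.inr i)))) ⬝ᵥ x ≤ -lo := hlow x (fun s => hx s)
          exact this
        obtain ⟨y, hy0, hrep⟩ := farkas_cone (fun s : Fin m => A' s) b'
          ⟨x0, fun s => hx0 s⟩ (-(A' j)) (-lo) hlow'
        have hdotx : ∀ x : Fin n → ℚ,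
            (-(A' j)) ⬝ᵥ x = ∑ s, y s * (A' s ⬝ᵥ x) := by
          intro x
          rw [hrep, dot_sum_left]
          simp [smul_dotProduct]
        have hsupp : ∀ s : Fin m, y s ≠ 0 → P s := by
          intro s hs
          have hspos : 0 < y s := lt_of_le_of_ne (hy0 s) (Ne.symm hs)
          refine ⟨(-(b' j) - ∑ r ∈ Finset.univ.erase s, y r * b' r) / y s, b' s,
            fun x hx => hx s, ?_⟩
          intro x hx
          have hd := hdotx x
          rw [← Finset.add_sum_erase Finset.univ _ (Finset.mem_univ s)] at hd
          have herase : ∑ r ∈ Finset.univ.erase s, y r * (A' r ⬝ᵥ x)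
              ≤ ∑ r ∈ Finset.univ.erase s, y r * b' r :=
            Finset.sum_le_sum fun r _ => mul_le_mul_of_nonneg_left (hx r) (hy0 r)
          have hxj : A' j ⬝ᵥ x ≤ b' j := hx j
          rw [neg_dotProduct] at hd ⊢
          rw [neg_le, neg_neg, div_le_iff₀ hspos]
          nlinarith
        refine ⟨-(∑ s, y s * b' s), fun x hx => ?_⟩
        have hterm : ∀ s : Fin m, y s * (A' s ⬝ᵥ x) ≤ y s * b' s := by
          intro s
          by_cases hys : y s = 0
          · simp [hys]
          · have hPs : P s := hsupp s hys
            have hkey : A' s ⬝ᵥ x ≤ b' s := by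
              have h7 := hx (e₂.symm ⟨s, hPs⟩)
              have h8 : e (Sum.inr (e₂.symm ⟨s, hPs⟩)) = s := by
                rw [he2, Equiv.apply_symm_apply]
              rw [show D.mulVec x (e₂.symm ⟨s, hPs⟩)
                  = A' (e (Sum.inr (e₂.symm ⟨s, hPs⟩))) ⬝ᵥ x from rfl, h8] at h7
              rw [show u (e₂.symm ⟨s, hPs⟩)
                  = b' (e (Sum.inr (e₂.symm ⟨s, hPs⟩))) from rfl, h8] at h7
              exact h7
            exact mul_le_mul_of_nonneg_left hkey (hy0 s)
        have hdd : D.mulVec x i = A' j ⬝ᵥ x := rfl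
        have hd := hdotx x
        rw [neg_dotProduct] at hd
        have hsum : ∑ s, y s * (A' s ⬝ᵥ x) ≤ ∑ s, y s * b' s :=
          Finset.sum_le_sum fun s _ => hterm s
        rw [hdd]
        linarith
      · refine ⟨0, fun x hx => absurd ?_ hfeas⟩
        refine ⟨x, fun s => ?_⟩
        have hall : ∀ r : Fin m, P r := by
          intro r
          refine ⟨0, 0, fun z hz => absurd ⟨z, hz⟩ hfeas, fun z hz => absurd ⟨z, hz⟩ hfeas⟩
        have hi : e (e.symm s) = s := e.apply_symm_apply s
        rcases hs : e.symm s with k | k <;> rw [hs] at hi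
        · exact absurd (hall (e₁ k).1) (e₁ k).2
        · rw [← hi]; exact hx k
    choose l hl using hlb
    exact ⟨l, fun x hx i => hl i x hx⟩
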